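/- Let G(n) denote the number of permutations σ of [n] = {1,…,n} that are not locally disjoint from the identity permutation. Then G(n) ≤ 5^n for every positive integer n. -/

import Mathlib

/-- Two permutations `σ` and `τ` of `[n]` are *locally disjoint* if there exist
distinct elements `a, b` with `σ⁻¹(a) < σ⁻¹(b) < τ⁻¹(a) < τ⁻¹(b)` or
`τ⁻¹(a) < τ⁻¹(b) < σ⁻¹(a) < σ⁻¹(b)`. -/
def LocallyDisjoint {n : ℕ} (σ τ : Equiv.Perm (Fin n)) : Prop :=
  ∃ a b : Fin n, a ≠ b ∧
    ((σ⁻¹ a < σ⁻¹ b ∧ σ⁻¹ b < τ⁻¹ a ∧ τ⁻¹ a < τ⁻¹ b) ∨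
     (τ⁻¹ a < τ⁻¹ b ∧ τ⁻¹ b < σ⁻¹ a ∧ σ⁻¹ a < σ⁻¹ b))

namespace CardNLD

variable {n : ℕ}

/-- pattern B forbidden: no i < j < σ i < σ j (crossing excedance arcs). -/
lemma nB {σ : Equiv.Perm (Fin n)} (h : ¬ LocallyDisjoint σ 1)
    {i j : Fin n} (h1 : i < j) (h2 : j < σ i) (h3 : σ i < σ j) : False := by
  apply h
  refine ⟨σ i, σ j, fun e => absurd (σ.injective e) (ne_of_lt h1), Or.inl ?_⟩
  simpa using ⟨h1, h2, h3⟩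

/-- pattern A forbidden: no σ i < σ j < i < j (crossing deficiency arcs). -/
lemma nA {σ : Equiv.Perm (Fin n)} (h : ¬ LocallyDisjoint σ 1)
    {i j : Fin n} (h1 : σ i < σ j) (h2 : σ j < i) (h3 : i < j) : False := by
  apply h
  refine ⟨σ i, σ j, fun e => absurd (σ.injective e) (ne_of_lt h3), Or.inr ?_⟩
  simpa using ⟨h1, h2, h3⟩

/-- Balance for an excedance arc (i, σ i). -/
lemma E_eq {σ : Equiv.Perm (Fin n)} (h : ¬ LocallyDisjoint σ 1)
    {i : Fin n} (hi : i < σ i) :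
    ((Finset.Ico i (σ i)).filter (fun x => x < σ x)).card
      = ((Finset.Ioc i (σ i)).filter (fun x => σ⁻¹ x < x)).card := by
  refine Finset.card_bij (fun x _ => σ x) ?_ ?_ ?_
  · intro x hx
    simp only [Finset.mem_filter, Finset.mem_Ico] at hx
    obtain ⟨⟨hxi, hxj⟩, hop⟩ := hx
    have hle : σ x ≤ σ i := by
      by_contra hgt
      push_neg at hgt
      have hxi' : i < x := by
        rcases eq_or_lt_of_le hxi with rfl | hh
        · exact absurd hgt (lt_irrefl _)
        · exact hh
      exact nB h hxi' hxj hgt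
    simp only [Finset.mem_filter, Finset.mem_Ioc, Equiv.Perm.coe_inv, Equiv.symm_apply_apply]
    exact ⟨⟨lt_of_le_of_lt hxi hop, hle⟩, hop⟩
  · intro a ha b hb e
    exact σ.injective e
  · intro c hc
    simp only [Finset.mem_filter, Finset.mem_Ioc] at hc
    obtain ⟨⟨hci, hcj⟩, hcl⟩ := hc
    refine ⟨σ⁻¹ c, ?_, by simp⟩
    simp only [Finset.mem_filter, Finset.mem_Ico, Equiv.Perm.coe_inv, Equiv.apply_symm_apply]
    refine ⟨⟨?_, lt_of_lt_of_le hcl hcj⟩, hcl⟩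
    by_contra hlt
    push_neg at hlt
    have hne : c < σ i := by
      rcases eq_or_lt_of_le hcj with rfl | hh
      · exact absurd (by simp : σ⁻¹ (σ i) = i) (by simpa using ne_of_lt hlt)
      · exact hh
    have h2 : i < σ (σ⁻¹ c) := by simpa using hci
    have h3 : σ (σ⁻¹ c) < σ i := by simpa using hne
    exact nB h hlt h2 h3

/-- Strict opener surplus strictly inside an excedance arc. -/
lemma E_lt {σ : Equiv.Perm (Fin n)} (h : ¬ LocallyDisjoint σ 1)
    {i k : Fin n} (hi : i < σ i) (h1 : i < k) (h2 : k < σ i) :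
    ((Finset.Ioc i k).filter (fun x => σ⁻¹ x < x)).card
      < ((Finset.Ico i k).filter (fun x => x < σ x)).card := by
  have hmem : i ∈ (Finset.Ico i k).filter (fun x => x < σ x) := by
    simp only [Finset.mem_filter, Finset.mem_Ico]
    exact ⟨⟨le_refl i, h1⟩, hi⟩
  have hsub : ((Finset.Ioc i k).filter (fun x => σ⁻¹ x < x)).image (fun c => σ⁻¹ c)
      ⊆ ((Finset.Ico i k).filter (fun x => x < σ x)).erase i := by
    intro y hy
    simp only [Finset.mem_image, Finset.mem_filter, Finset.mem_Ioc] at hy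
    obtain ⟨c, ⟨⟨hci, hck⟩, hcl⟩, rfl⟩ := hy
    have hcs : c < σ i := lt_of_le_of_lt hck h2
    have hne : σ⁻¹ c ≠ i := by
      intro e
      have : c = σ i := by
        have := congrArg σ e
        simpa using this
      exact absurd this (ne_of_lt hcs)
    refine Finset.mem_erase.2 ⟨hne, ?_⟩
    simp only [Finset.mem_filter, Finset.mem_Ico, Equiv.Perm.coe_inv, Equiv.apply_symm_apply]
    refine ⟨⟨?_, lt_of_lt_of_le hcl hck⟩, hcl⟩
    by_contra hlt
    push_neg at hlt
    have h2' : i < σ (σ⁻¹ c) := by simpa using hci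
    have h3' : σ (σ⁻¹ c) < σ i := by simpa using hcs
    exact nB h hlt h2' h3'
  calc ((Finset.Ioc i k).filter (fun x => σ⁻¹ x < x)).card
      = (((Finset.Ioc i k).filter (fun x => σ⁻¹ x < x)).image (fun c => σ⁻¹ c)).card :=
        (Finset.card_image_of_injective _ (σ⁻¹).injective).symm
    _ ≤ (((Finset.Ico i k).filter (fun x => x < σ x)).erase i).card :=
        Finset.card_le_card hsub
    _ < ((Finset.Ico i k).filter (fun x => x < σ x)).card :=
        Finset.card_erase_lt_of_mem hmem

/-- Balance for a deficiency arc (σ j, j). -/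
lemma D_eq {σ : Equiv.Perm (Fin n)} (h : ¬ LocallyDisjoint σ 1)
    {j : Fin n} (hj : σ j < j) :
    ((Finset.Ico (σ j) j).filter (fun x => x < σ⁻¹ x)).card
      = ((Finset.Ioc (σ j) j).filter (fun x => σ x < x)).card := by
  refine Finset.card_bij (fun x _ => σ⁻¹ x) ?_ ?_ ?_
  · intro x hx
    simp only [Finset.mem_filter, Finset.mem_Ico] at hx
    obtain ⟨⟨hxi, hxj⟩, hop⟩ := hx
    have hle : σ⁻¹ x ≤ j := by
      by_contra hgt
      push_neg at hgt
      have hxi' : σ j < x := by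
        rcases eq_or_lt_of_le hxi with rfl | hh
        · exact absurd (by simp : σ⁻¹ (σ j) = j) (fun e => absurd (e ▸ hgt) (lt_irrefl _))
        · exact hh
      have h1' : σ j < σ (σ⁻¹ x) := by simpa using hxi'
      have h2' : σ (σ⁻¹ x) < j := by simpa using hxj
      exact nA h h1' h2' hgt
    simp only [Finset.mem_filter, Finset.mem_Ioc, Equiv.Perm.coe_inv, Equiv.apply_symm_apply]
    exact ⟨⟨lt_of_le_of_lt hxi hop, hle⟩, hop⟩
  · intro a ha b hb e
    exact (σ⁻¹).injective e
  · intro c hc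
    simp only [Finset.mem_filter, Finset.mem_Ioc] at hc
    obtain ⟨⟨hci, hcj⟩, hcl⟩ := hc
    refine ⟨σ c, ?_, by simp⟩
    simp only [Finset.mem_filter, Finset.mem_Ico, Equiv.Perm.coe_inv, Equiv.symm_apply_apply]
    refine ⟨⟨?_, lt_of_lt_of_le hcl hcj⟩, hcl⟩
    by_contra hlt
    push_neg at hlt
    have hne : c < j := by
      rcases eq_or_lt_of_le hcj with rfl | hh
      · exact absurd hlt (lt_irrefl _)
      · exact hh
    exact nA h hlt hci hne
  
/-- Strict closer surplus strictly inside a deficiency arc. -/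
lemma D_lt {σ : Equiv.Perm (Fin n)} (h : ¬ LocallyDisjoint σ 1)
    {j m : Fin n} (hj : σ j < j) (h1 : σ j < m) (h2 : m < j) :
    ((Finset.Ico m j).filter (fun x => x < σ⁻¹ x)).card
      < ((Finset.Ioc m j).filter (fun x => σ x < x)).card := by
  have hmem : j ∈ (Finset.Ioc m j).filter (fun x => σ x < x) := by
    simp only [Finset.mem_filter, Finset.mem_Ioc]
    exact ⟨⟨h2, le_refl j⟩, hj⟩
  have hsub : ((Finset.Ico m j).filter (fun x => x < σ⁻¹ x)).image (fun v => σ⁻¹ v)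
      ⊆ ((Finset.Ioc m j).filter (fun x => σ x < x)).erase j := by
    intro y hy
    simp only [Finset.mem_image, Finset.mem_filter, Finset.mem_Ico] at hy
    obtain ⟨v, ⟨⟨hvm, hvj⟩, hop⟩, rfl⟩ := hy
    have hvs : σ j < v := lt_of_lt_of_le h1 hvm
    have hne : σ⁻¹ v ≠ j := by
      intro e
      have : v = σ j := by
        have := congrArg σ e
        simpa using this
      exact absurd this (ne_of_gt hvs)
    refine Finset.mem_erase.2 ⟨hne, ?_⟩
    simp only [Finset.mem_filter, Finset.mem_Ioc, Equiv.Perm.coe_inv, Equiv.apply_symm_apply]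
    refine ⟨⟨lt_of_le_of_lt hvm hop, ?_⟩, hop⟩
    by_contra hgt
    push_neg at hgt
    have h1' : σ j < σ (σ⁻¹ v) := by simpa using hvs
    have h2' : σ (σ⁻¹ v) < j := by simpa using hvj
    exact nA h h1' h2' hgt
  calc ((Finset.Ico m j).filter (fun x => x < σ⁻¹ x)).card
      = (((Finset.Ico m j).filter (fun x => x < σ⁻¹ x)).image (fun v => σ⁻¹ v)).card :=
        (Finset.card_image_of_injective _ (σ⁻¹).injective).symm
    _ ≤ (((Finset.Ioc m j).filter (fun x => σ x < x)).erase j).card :=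
        Finset.card_le_card hsub
    _ < ((Finset.Ioc m j).filter (fun x => σ x < x)).card :=
        Finset.card_erase_lt_of_mem hmem

/-- Two non-locally-disjoint permutations with the same type data are equal. -/
lemma perm_eq {σ τ : Equiv.Perm (Fin n)}
    (hσ : ¬ LocallyDisjoint σ 1) (hτ : ¬ LocallyDisjoint τ 1)
    (hO : ∀ x, x < σ x ↔ x < τ x) (hCp : ∀ x, σ x < x ↔ τ x < x)
    (hOp : ∀ x, x < σ⁻¹ x ↔ x < τ⁻¹ x) (hC : ∀ x, σ⁻¹ x < x ↔ τ⁻¹ x < x) :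
    σ = τ := by
  have fO : ∀ s : Finset (Fin n),
      s.filter (fun x => x < σ x) = s.filter (fun x => x < τ x) :=
    fun s => Finset.filter_congr (fun x _ => by simpa using hO x)
  have fC : ∀ s : Finset (Fin n),
      s.filter (fun x => σ⁻¹ x < x) = s.filter (fun x => τ⁻¹ x < x) :=
    fun s => Finset.filter_congr (fun x _ => by simpa using hC x)
  have fOp : ∀ s : Finset (Fin n),
      s.filter (fun x => x < σ⁻¹ x) = s.filter (fun x => x < τ⁻¹ x) :=
    fun s => Finset.filter_congr (fun x _ => by simpa using hOp x)
  have fCp : ∀ s : Finset (Fin n),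
      s.filter (fun x => σ x < x) = s.filter (fun x => τ x < x) :=
    fun s => Finset.filter_congr (fun x _ => by simpa using hCp x)
  apply Equiv.ext
  intro x
  rcases lt_trichotomy x (σ x) with hlt | heq | hgt
  · have hτx : x < τ x := (hO x).1 hlt
    rcases lt_trichotomy (σ x) (τ x) with hst | he | hts
    · exfalso
      have e1 := E_eq hσ hlt
      have e2 := E_lt hτ hτx hlt hst
      rw [← fC, ← fO] at e2
      omega
    · exact he
    · exfalso
      have e1 := E_eq hτ hτx
      have e2 := E_lt hσ hlt hτx hts
      rw [fC, fO] at e2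
      omega
  · have h1 : ¬ x < τ x := fun hh => absurd ((hO x).2 hh) (heq ▸ lt_irrefl x)
    have h2 : ¬ τ x < x := fun hh => absurd ((hCp x).2 hh) (heq ▸ lt_irrefl x)
    exact heq.symm.trans (le_antisymm (not_lt.1 h1) (not_lt.1 h2)).symm
  · have hτx : τ x < x := (hCp x).1 hgt
    rcases lt_trichotomy (σ x) (τ x) with hst | he | hts
    · exfalso
      have e1 := D_eq hτ hτx
      have e2 := D_lt hσ hgt hst hτx
      rw [fOp, fCp] at e2
      omega
    · exact he
    · exfalso
      have e1 := D_eq hσ hgt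
      have e2 := D_lt hτ hτx hts hgt
      rw [← fOp, ← fCp] at e2
      omega

/-- 5-valued type encoding. -/
def encode (σ : Equiv.Perm (Fin n)) : Fin n → Fin 5 := fun x =>
  if x < σ x then (if x < σ⁻¹ x then 0 else 1)
  else if σ x < x then (if x < σ⁻¹ x then 2 else 3)
  else 4

lemma encode_inj {σ τ : Equiv.Perm (Fin n)}
    (hσ : ¬ LocallyDisjoint σ 1) (hτ : ¬ LocallyDisjoint τ 1)
    (he : encode σ = encode τ) : σ = τ := by
  have key : ∀ x : Fin n, (x < σ x ↔ x < τ x) ∧ (σ x < x ↔ τ x < x)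
      ∧ (x < σ⁻¹ x ↔ x < τ⁻¹ x) ∧ (σ⁻¹ x < x ↔ τ⁻¹ x < x) := by
    intro x
    have hx := congrFun he x
    have f1 : σ⁻¹ x = x ↔ σ x = x := by
      rw [Equiv.Perm.inv_eq_iff_eq]; exact eq_comm
    have f2 : τ⁻¹ x = x ↔ τ x = x := by
      rw [Equiv.Perm.inv_eq_iff_eq]; exact eq_comm
    have g1 : (σ⁻¹ x).val = x.val ↔ (σ x).val = x.val := by
      simpa [Fin.ext_iff] using f1
    have g2 : (τ⁻¹ x).val = x.val ↔ (τ x).val = x.val := by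
      simpa [Fin.ext_iff] using f2
    clear f1 f2 he
    simp only [encode] at hx
    split_ifs at hx <;>
      first
        | exact absurd hx (by decide)
        | (simp only [Fin.lt_def] at *; omega)
  exact perm_eq hσ hτ (fun x => (key x).1) (fun x => (key x).2.1)
    (fun x => (key x).2.2.1) (fun x => (key x).2.2.2)

end CardNLD

/-- The number of permutations of `[n]` not locally disjoint from the identity
permutation is at most `5 ^ n`. -/
theorem card_not_locallyDisjoint_id_le (n : ℕ) (hn : 0 < n) :
    Nat.card {σ : Equiv.Perm (Fin n) // ¬ LocallyDisjoint σ 1} ≤ 5 ^ n := by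
  have hinj : Function.Injective
      (fun s : {σ : Equiv.Perm (Fin n) // ¬ LocallyDisjoint σ 1} => CardNLD.encode s.1) := by
    rintro ⟨σ, hσ⟩ ⟨τ, hτ⟩ h
    exact Subtype.ext (CardNLD.encode_inj hσ hτ h)
  calc Nat.card {σ : Equiv.Perm (Fin n) // ¬ LocallyDisjoint σ 1}
      ≤ Nat.card (Fin n → Fin 5) := Nat.card_le_card_of_injective _ hinj
    _ = 5 ^ n := by simp [Nat.card_eq_fintype_card]
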